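/- There exists an axis-parallel lattice path in ℝ² with 8 steps, alternating between the two coordinate directions with step lengths (1,1,−2,3,−1,−1,2,−3) (horizontal steps 1,−2,−1,2 and vertical steps 1,3,−1,−3 interleaved), of total lattice length 14 < 2^4 = 16, whose signature tensors of orders 1, 2, and 3 all vanish. -/

import Mathlib

open scoped BigOperators
open Matrix

/-- Iterated-integral signature: `sigAux` integrates the head letter outermost. -/
noncomputable def sigAux (d : ℕ) (X : ℝ → Fin d → ℝ) : List (Fin d) → ℝ → ℝ
  | [], _ => 1
  | i :: w, t => ∫ s in (0:ℝ)..t, sigAux d X w s * deriv (fun u => X u i) s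

/-- The signature coordinate σ_{i₁⋯i_k} of the path `X`, for the word `w = [i₁,…,i_k]`. -/
noncomputable def sigEntry (d : ℕ) (X : ℝ → Fin d → ℝ) (w : List (Fin d)) : ℝ :=
  sigAux d X w.reverse 1

/-- A path `[0,1] → ℝ^d` is piecewise continuously differentiable. -/
def PiecewiseC1 (d : ℕ) (X : ℝ → Fin d → ℝ) : Prop :=
  ∃ (m : ℕ) (t : Fin (m + 1) → ℝ), StrictMono t ∧ t 0 = 0 ∧ t (Fin.last m) = 1 ∧
    ∀ i : Fin m, ContDiffOn ℝ 1 X (Set.Icc (t i.castSucc) (t i.succ))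

/-- The piecewise linear path on `[0,1]` with `m` consecutive linear steps. -/
noncomputable def plPath (d m : ℕ) (v : Fin m → Fin d → ℝ) : ℝ → Fin d → ℝ :=
  fun t j => ∑ i : Fin m, min 1 (max 0 ((m : ℝ) * t - (i : ℕ))) * v i j

/-- The 8 steps of the Lyons–Xu counterexample path: axis-parallel steps
`(1,0),(0,1),(-2,0),(0,3),(-1,0),(0,-1),(2,0),(0,-3)`. -/
noncomputable def lxSteps : Fin 8 → Fin 2 → ℝ :=
  ![![1, 0], ![0, 1], ![-2, 0], ![0, 3], ![-1, 0], ![0, -1], ![2, 0], ![0, -3]]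

open MeasureTheory Set

noncomputable def cub (c : ℕ → ℝ) : ℝ → ℝ := fun t => c 0 + c 1 * t + c 2 * t^2 + c 3 * t^3
noncomputable def cubI (c : ℕ → ℝ) : ℝ → ℝ :=
  fun t => c 0 * t + c 1 * t^2/2 + c 2 * t^3/3 + c 3 * t^4/4

lemma cub_continuous (c : ℕ → ℝ) : Continuous (cub c) := by unfold cub; fun_prop

lemma hasDerivAt_cubI (c : ℕ → ℝ) (t : ℝ) : HasDerivAt (cubI c) (cub c t) t := by
  have h := ((((hasDerivAt_id t).const_mul (c 0)).add
      (((hasDerivAt_pow 2 t).const_mul (c 1)).div_const 2)).add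
      (((hasDerivAt_pow 3 t).const_mul (c 2)).div_const 3)).add
      (((hasDerivAt_pow 4 t).const_mul (c 3)).div_const 4)
  have h2 : c 0 * 1 + c 1 * (((2:ℕ):ℝ) * t ^ (2-1)) / 2 + c 2 * (((3:ℕ):ℝ) * t ^ (3-1)) / 3
      + c 3 * (((4:ℕ):ℝ) * t ^ (4-1)) / 4 = cub c t := by
    unfold cub; push_cast; ring
  rw [h2] at h
  exact h

noncomputable def stepv (v : Fin 8 → Fin 2 → ℝ) (k : ℕ) (j : Fin 2) : ℝ :=
  if h : k < 8 then v ⟨k, h⟩ j else 0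

def Fits (f : ℝ → ℝ) (C : ℕ → ℕ → ℝ) : Prop :=
  ∀ k : ℕ, k < 8 → ∀ t ∈ Set.Icc ((k:ℝ)/8) (((k:ℝ)+1)/8), f t = cub (C k) t

lemma plPath_deriv (v : Fin 8 → Fin 2 → ℝ) (j : Fin 2) (k : ℕ) (hk : k < 8)
    {t : ℝ} (ht : t ∈ Set.Ioo ((k:ℝ)/8) (((k:ℝ)+1)/8)) :
    deriv (fun u => plPath 2 8 v u j) t = 8 * stepv v k j := by
  have hmem : Set.Ioo ((k:ℝ)/8) (((k:ℝ)+1)/8) ∈ nhds t := Ioo_mem_nhds ht.1 ht.2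
  have heq : (fun u => plPath 2 8 v u j) =ᶠ[nhds t]
      (fun u => ∑ i : Fin 8,
        (if (i:ℕ) < k then (1:ℝ) else if (i:ℕ) = k then 8*u - k else 0) * v i j) := by
    filter_upwards [hmem] with u hu
    unfold plPath
    refine Finset.sum_congr rfl fun i _ => ?_
    have h8u : (k:ℝ) < 8 * u := by
      have := hu.1
      linarith [hu.1]
    have h8u' : 8 * u < (k:ℝ) + 1 := by linarith [hu.2]
    rcases lt_trichotomy (i:ℕ) k with h | h | h
    · rw [if_pos h]
      have hi : (i:ℝ) + 1 ≤ (k:ℝ) := by exact_mod_cast Nat.succ_le_of_lt h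
      have h1 : (1:ℝ) ≤ ((8:ℕ):ℝ) * u - (i:ℕ) := by push_cast; linarith
      rw [max_eq_right (by linarith), min_eq_left h1]
    · rw [if_neg (by omega), if_pos h]
      have hik : (i:ℝ) = (k:ℝ) := by exact_mod_cast h
      have h0 : (0:ℝ) ≤ ((8:ℕ):ℝ) * u - (i:ℕ) := by push_cast; rw [hik]; linarith
      have h1 : ((8:ℕ):ℝ) * u - (i:ℕ) ≤ 1 := by push_cast; rw [hik]; linarith
      rw [max_eq_right h0, min_eq_right h1]
      push_cast
      rw [hik]
    · rw [if_neg (by omega), if_neg (by omega)]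
      have hi : (k:ℝ) + 1 ≤ (i:ℝ) := by exact_mod_cast Nat.succ_le_of_lt h
      have h0 : ((8:ℕ):ℝ) * u - (i:ℕ) ≤ 0 := by push_cast; linarith
      rw [max_eq_left h0, min_eq_right (by norm_num)]
  rw [heq.deriv_eq]
  have hD : HasDerivAt (fun u => ∑ i : Fin 8,
      (if (i:ℕ) < k then (1:ℝ) else if (i:ℕ) = k then 8*u - k else 0) * v i j)
      (∑ i : Fin 8, (if i = (⟨k, hk⟩ : Fin 8) then 8 * v i j else 0)) t := by
    apply HasDerivAt.fun_sum
    intro i _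
    rcases lt_trichotomy (i:ℕ) k with h | h | h
    · simp only [if_pos h, if_neg (show i ≠ (⟨k,hk⟩ : Fin 8) by simp [Fin.ext_iff]; omega)]
      exact hasDerivAt_const t _
    · simp only [if_neg (by omega : ¬ (i:ℕ) < k), if_pos h,
        if_pos (show i = (⟨k,hk⟩ : Fin 8) by simp [Fin.ext_iff, h])]
      have := (((hasDerivAt_id t).const_mul (8:ℝ)).sub_const (k:ℝ)).mul_const (v i j)
      simpa using this
    · simp only [if_neg (by omega : ¬ (i:ℕ) < k), if_neg (by omega : ¬ (i:ℕ) = k),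
        if_neg (show i ≠ (⟨k,hk⟩ : Fin 8) by simp [Fin.ext_iff]; omega)]
      simpa using hasDerivAt_const t (0 * v i j)
  rw [hD.deriv, Finset.sum_ite_eq' Finset.univ (⟨k,hk⟩ : Fin 8) (fun i => 8 * v i j)]
  simp [stepv, hk]

lemma seg_integral (v : Fin 8 → Fin 2 → ℝ) (f : ℝ → ℝ) (C : ℕ → ℕ → ℝ) (hf : Fits f C)
    (j : Fin 2) (k : ℕ) (hk : k < 8) {τ : ℝ} (hτ : τ ∈ Set.Icc ((k:ℝ)/8) (((k:ℝ)+1)/8)) :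
    ∫ s in ((k:ℝ)/8)..τ, f s * deriv (fun u => plPath 2 8 v u j) s
      = 8 * stepv v k j * (cubI (C k) τ - cubI (C k) ((k:ℝ)/8)) := by
  have hle : (k:ℝ)/8 ≤ τ := hτ.1
  have hcong : ∀ᵐ s : ℝ, s ∈ Set.uIoc ((k:ℝ)/8) τ →
      f s * deriv (fun u => plPath 2 8 v u j) s = cub (C k) s * (8 * stepv v k j) := by
    have h0 : (volume : Measure ℝ) {(((k:ℝ)+1)/8)} = 0 := measure_singleton _
    filter_upwards [compl_mem_ae_iff.2 h0] with s hs hmem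
    rw [Set.uIoc_of_le hle] at hmem
    have hsne : s ≠ ((k:ℝ)+1)/8 := hs
    have hlt : s < ((k:ℝ)+1)/8 := lt_of_le_of_ne (le_trans hmem.2 hτ.2) hsne
    have hIoo : s ∈ Set.Ioo ((k:ℝ)/8) (((k:ℝ)+1)/8) := ⟨hmem.1, hlt⟩
    rw [plPath_deriv v j k hk hIoo, hf k hk s ⟨le_of_lt hmem.1, le_of_lt hlt⟩]
  rw [intervalIntegral.integral_congr_ae hcong, intervalIntegral.integral_mul_const,
    intervalIntegral.integral_eq_sub_of_hasDerivAt
      (fun x _ => hasDerivAt_cubI (C k) x) ((cub_continuous (C k)).intervalIntegrable _ _)]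
  ring

lemma seg_integrable (v : Fin 8 → Fin 2 → ℝ) (f : ℝ → ℝ) (C : ℕ → ℕ → ℝ) (hf : Fits f C)
    (j : Fin 2) (k : ℕ) (hk : k < 8) {a b : ℝ}
    (ha : a ∈ Set.Icc ((k:ℝ)/8) (((k:ℝ)+1)/8)) (hb : b ∈ Set.Icc ((k:ℝ)/8) (((k:ℝ)+1)/8)) :
    IntervalIntegrable (fun s => f s * deriv (fun u => plPath 2 8 v u j) s) volume a b := by
  have hcont : IntervalIntegrable (fun s => cub (C k) s * (8 * stepv v k j)) volume a b :=
    Continuous.intervalIntegrable (by unfold cub; fun_prop) a b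
  apply hcont.congr_ae
  rw [Filter.EventuallyEq, ae_restrict_iff' measurableSet_uIoc]
  have h0 : (volume : Measure ℝ) {(((k:ℝ)+1)/8)} = 0 := measure_singleton _
  filter_upwards [compl_mem_ae_iff.2 h0] with s hs hmem
  have hsne : s ≠ ((k:ℝ)+1)/8 := hs
  rw [Set.uIoc_eq_union] at hmem
  have hIoo : s ∈ Set.Ioo ((k:ℝ)/8) (((k:ℝ)+1)/8) := by
    rcases hmem with h | h
    · exact ⟨lt_of_le_of_lt ha.1 h.1, lt_of_le_of_ne (le_trans h.2 hb.2) hsne⟩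
    · exact ⟨lt_of_le_of_lt hb.1 h.1, lt_of_le_of_ne (le_trans h.2 ha.2) hsne⟩
  rw [plPath_deriv v j k hk hIoo, hf k hk s ⟨le_of_lt hIoo.1, le_of_lt hIoo.2⟩]

lemma integrable_upto (v : Fin 8 → Fin 2 → ℝ) (f : ℝ → ℝ) (C : ℕ → ℕ → ℝ) (hf : Fits f C)
    (j : Fin 2) : ∀ k : ℕ, k ≤ 8 →
    IntervalIntegrable (fun s => f s * deriv (fun u => plPath 2 8 v u j) s) volume 0 ((k:ℝ)/8)
  | 0, _ => by
      rw [intervalIntegrable_iff]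
      norm_num
  | (k+1), hk => by
      have h1 : IntervalIntegrable (fun s => f s * deriv (fun u => plPath 2 8 v u j) s)
          volume 0 ((k:ℝ)/8) := integrable_upto v f C hf j k (by omega)
      have h2 : IntervalIntegrable (fun s => f s * deriv (fun u => plPath 2 8 v u j) s)
          volume ((k:ℝ)/8) (((k:ℝ)+1)/8) :=
        seg_integrable v f C hf j k (by omega)
          (Set.left_mem_Icc.2 (by linarith)) (Set.right_mem_Icc.2 (by linarith))
      have h3 : (((k:ℕ)+1:ℕ):ℝ)/8 = ((k:ℝ)+1)/8 := by push_cast; ring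
      rw [h3]
      exact h1.trans h2

lemma sum_upto (v : Fin 8 → Fin 2 → ℝ) (f : ℝ → ℝ) (C : ℕ → ℕ → ℝ) (hf : Fits f C)
    (j : Fin 2) : ∀ k : ℕ, k ≤ 8 →
    ∫ s in (0:ℝ)..((k:ℝ)/8), f s * deriv (fun u => plPath 2 8 v u j) s
      = ∑ m ∈ Finset.range k,
          8 * stepv v m j * (cubI (C m) (((m:ℝ)+1)/8) - cubI (C m) ((m:ℝ)/8))
  | 0, _ => by norm_num
  | (k+1), hk => by
      have h3 : (((k:ℕ)+1:ℕ):ℝ)/8 = ((k:ℝ)+1)/8 := by push_cast; ring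
      rw [h3, Finset.sum_range_succ, ← sum_upto v f C hf j k (by omega),
        ← seg_integral v f C hf j k (by omega)
          (Set.right_mem_Icc.2 (by linarith)),
        intervalIntegral.integral_add_adjacent_intervals
          (integrable_upto v f C hf j k (by omega))
          (seg_integrable v f C hf j k (by omega)
            (Set.left_mem_Icc.2 (by linarith)) (Set.right_mem_Icc.2 (by linarith)))]

lemma fits_integral (v : Fin 8 → Fin 2 → ℝ) (f : ℝ → ℝ) (C : ℕ → ℕ → ℝ) (hf : Fits f C)
    (j : Fin 2) (D : ℕ → ℕ → ℝ)
    (hD : ∀ k : ℕ, k < 8 → ∀ t : ℝ, cub (D k) t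
      = (∑ m ∈ Finset.range k,
          8 * stepv v m j * (cubI (C m) (((m:ℝ)+1)/8) - cubI (C m) ((m:ℝ)/8)))
        + 8 * stepv v k j * (cubI (C k) t - cubI (C k) ((k:ℝ)/8))) :
    Fits (fun t => ∫ s in (0:ℝ)..t, f s * deriv (fun u => plPath 2 8 v u j) s) D := by
  intro k hk t ht
  rw [hD k hk t, ← sum_upto v f C hf j k (by omega),
    ← seg_integral v f C hf j k hk ht,
    intervalIntegral.integral_add_adjacent_intervals
      (integrable_upto v f C hf j k (by omega))
      (seg_integrable v f C hf j k hk (Set.left_mem_Icc.2 (by linarith)) ht)]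

lemma sig_val (v : Fin 8 → Fin 2 → ℝ) (w : List (Fin 2)) (C : ℕ → ℕ → ℝ)
    (hf : Fits (sigAux 2 (plPath 2 8 v) w) C) (j : Fin 2) :
    sigAux 2 (plPath 2 8 v) (j :: w) 1
      = ∑ m ∈ Finset.range 8,
          8 * stepv v m j * (cubI (C m) (((m:ℝ)+1)/8) - cubI (C m) ((m:ℝ)/8)) := by
  have h := sum_upto v _ C hf j 8 le_rfl
  norm_num at h
  simpa [sigAux] using h

lemma fits_cons (v : Fin 8 → Fin 2 → ℝ) (w : List (Fin 2)) (C D : ℕ → ℕ → ℝ)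
    (hf : Fits (sigAux 2 (plPath 2 8 v) w) C) (j : Fin 2)
    (hD : ∀ k : ℕ, k < 8 → ∀ t : ℝ, cub (D k) t
      = (∑ m ∈ Finset.range k,
          8 * stepv v m j * (cubI (C m) (((m:ℝ)+1)/8) - cubI (C m) ((m:ℝ)/8)))
        + 8 * stepv v k j * (cubI (C k) t - cubI (C k) ((k:ℝ)/8))) :
    Fits (sigAux 2 (plPath 2 8 v) (j :: w)) D := by
  intro k hk t ht
  have h := fits_integral v _ C hf j D hD k hk t ht
  simpa [sigAux] using h

noncomputable def Tone : ℕ → ℕ → ℝ := fun _ i => if i = 0 then 1 else 0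

lemma fits_nil (v : Fin 8 → Fin 2 → ℝ) : Fits (sigAux 2 (plPath 2 8 v) []) Tone := by
  intro k hk t ht
  norm_num [sigAux, cub, Tone]
noncomputable def Ta : ℕ → ℕ → ℝ := fun k i =>
  if k = 0 then (if i = 0 then 0 else if i = 1 then 8 else if i = 2 then 0 else 0) else
  if k = 1 then (if i = 0 then 1 else if i = 1 then 0 else if i = 2 then 0 else 0) else
  if k = 2 then (if i = 0 then 5 else if i = 1 then (-16) else if i = 2 then 0 else 0) else
  if k = 3 then (if i = 0 then (-1) else if i = 1 then 0 else if i = 2 then 0 else 0) else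
  if k = 4 then (if i = 0 then 3 else if i = 1 then (-8) else if i = 2 then 0 else 0) else
  if k = 5 then (if i = 0 then (-2) else if i = 1 then 0 else if i = 2 then 0 else 0) else
  if k = 6 then (if i = 0 then (-14) else if i = 1 then 16 else if i = 2 then 0 else 0) else
  if k = 7 then (if i = 0 then 0 else if i = 1 then 0 else if i = 2 then 0 else 0) else
  0

noncomputable def Tb : ℕ → ℕ → ℝ := fun k i =>
  if k = 0 then (if i = 0 then 0 else if i = 1 then 0 else if i = 2 then 0 else 0) else
  if k = 1 then (if i = 0 then (-1) else if i = 1 then 8 else if i = 2 then 0 else 0) else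
  if k = 2 then (if i = 0 then 1 else if i = 1 then 0 else if i = 2 then 0 else 0) else
  if k = 3 then (if i = 0 then (-8) else if i = 1 then 24 else if i = 2 then 0 else 0) else
  if k = 4 then (if i = 0 then 4 else if i = 1 then 0 else if i = 2 then 0 else 0) else
  if k = 5 then (if i = 0 then 9 else if i = 1 then (-8) else if i = 2 then 0 else 0) else
  if k = 6 then (if i = 0 then 3 else if i = 1 then 0 else if i = 2 then 0 else 0) else
  if k = 7 then (if i = 0 then 24 else if i = 1 then (-24) else if i = 2 then 0 else 0) else
  0

noncomputable def Taa : ℕ → ℕ → ℝ := fun k i =>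
  if k = 0 then (if i = 0 then 0 else if i = 1 then 0 else if i = 2 then 32 else 0) else
  if k = 1 then (if i = 0 then (1/2) else if i = 1 then 0 else if i = 2 then 0 else 0) else
  if k = 2 then (if i = 0 then (25/2) else if i = 1 then (-80) else if i = 2 then 128 else 0) else
  if k = 3 then (if i = 0 then (1/2) else if i = 1 then 0 else if i = 2 then 0 else 0) else
  if k = 4 then (if i = 0 then (9/2) else if i = 1 then (-24) else if i = 2 then 32 else 0) else
  if k = 5 then (if i = 0 then 2 else if i = 1 then 0 else if i = 2 then 0 else 0) else
  if k = 6 then (if i = 0 then 98 else if i = 1 then (-224) else if i = 2 then 128 else 0) else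
  if k = 7 then (if i = 0 then 0 else if i = 1 then 0 else if i = 2 then 0 else 0) else
  0

noncomputable def Tab : ℕ → ℕ → ℝ := fun k i =>
  if k = 0 then (if i = 0 then 0 else if i = 1 then 0 else if i = 2 then 0 else 0) else
  if k = 1 then (if i = 0 then 0 else if i = 1 then 0 else if i = 2 then 0 else 0) else
  if k = 2 then (if i = 0 then 4 else if i = 1 then (-16) else if i = 2 then 0 else 0) else
  if k = 3 then (if i = 0 then (-2) else if i = 1 then 0 else if i = 2 then 0 else 0) else
  if k = 4 then (if i = 0 then 14 else if i = 1 then (-32) else if i = 2 then 0 else 0) else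
  if k = 5 then (if i = 0 then (-6) else if i = 1 then 0 else if i = 2 then 0 else 0) else
  if k = 6 then (if i = 0 then (-42) else if i = 1 then 48 else if i = 2 then 0 else 0) else
  if k = 7 then (if i = 0 then 0 else if i = 1 then 0 else if i = 2 then 0 else 0) else
  0

noncomputable def Tba : ℕ → ℕ → ℝ := fun k i =>
  if k = 0 then (if i = 0 then 0 else if i = 1 then 0 else if i = 2 then 0 else 0) else
  if k = 1 then (if i = 0 then (-1) else if i = 1 then 8 else if i = 2 then 0 else 0) else
  if k = 2 then (if i = 0 then 1 else if i = 1 then 0 else if i = 2 then 0 else 0) else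
  if k = 3 then (if i = 0 then 10 else if i = 1 then (-24) else if i = 2 then 0 else 0) else
  if k = 4 then (if i = 0 then (-2) else if i = 1 then 0 else if i = 2 then 0 else 0) else
  if k = 5 then (if i = 0 then (-12) else if i = 1 then 16 else if i = 2 then 0 else 0) else
  if k = 6 then (if i = 0 then 0 else if i = 1 then 0 else if i = 2 then 0 else 0) else
  if k = 7 then (if i = 0 then 0 else if i = 1 then 0 else if i = 2 then 0 else 0) else
  0

noncomputable def Tbb : ℕ → ℕ → ℝ := fun k i =>
  if k = 0 then (if i = 0 then 0 else if i = 1 then 0 else if i = 2 then 0 else 0) else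
  if k = 1 then (if i = 0 then (1/2) else if i = 1 then (-8) else if i = 2 then 32 else 0) else
  if k = 2 then (if i = 0 then (1/2) else if i = 1 then 0 else if i = 2 then 0 else 0) else
  if k = 3 then (if i = 0 then 32 else if i = 1 then (-192) else if i = 2 then 288 else 0) else
  if k = 4 then (if i = 0 then 8 else if i = 1 then 0 else if i = 2 then 0 else 0) else
  if k = 5 then (if i = 0 then (81/2) else if i = 1 then (-72) else if i = 2 then 32 else 0) else
  if k = 6 then (if i = 0 then (9/2) else if i = 1 then 0 else if i = 2 then 0 else 0) else
  if k = 7 then (if i = 0 then 288 else if i = 1 then (-576) else if i = 2 then 288 else 0) else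
  0

@[simp] lemma sv00 : stepv lxSteps 0 0 = 1 := by norm_num [stepv, lxSteps]
@[simp] lemma sv01 : stepv lxSteps 0 1 = 0 := by norm_num [stepv, lxSteps]
@[simp] lemma sv10 : stepv lxSteps 1 0 = 0 := by norm_num [stepv, lxSteps]
@[simp] lemma sv11 : stepv lxSteps 1 1 = 1 := by norm_num [stepv, lxSteps]
@[simp] lemma sv20 : stepv lxSteps 2 0 = (-2) := by norm_num [stepv, lxSteps]
@[simp] lemma sv21 : stepv lxSteps 2 1 = 0 := by norm_num [stepv, lxSteps]
@[simp] lemma sv30 : stepv lxSteps 3 0 = 0 := by norm_num [stepv, lxSteps]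
@[simp] lemma sv31 : stepv lxSteps 3 1 = 3 := by norm_num [stepv, lxSteps]
@[simp] lemma sv40 : stepv lxSteps 4 0 = (-1) := by norm_num [stepv, lxSteps]
@[simp] lemma sv41 : stepv lxSteps 4 1 = 0 := by norm_num [stepv, lxSteps]
@[simp] lemma sv50 : stepv lxSteps 5 0 = 0 := by norm_num [stepv, lxSteps]
@[simp] lemma sv51 : stepv lxSteps 5 1 = (-1) := by norm_num [stepv, lxSteps]
@[simp] lemma sv60 : stepv lxSteps 6 0 = 2 := by norm_num [stepv, lxSteps]
@[simp] lemma sv61 : stepv lxSteps 6 1 = 0 := by norm_num [stepv, lxSteps]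
@[simp] lemma sv70 : stepv lxSteps 7 0 = 0 := by norm_num [stepv, lxSteps]
@[simp] lemma sv71 : stepv lxSteps 7 1 = (-3) := by norm_num [stepv, lxSteps]

set_option maxHeartbeats 1000000 in
lemma fits_A : Fits (sigAux 2 (plPath 2 8 lxSteps) [0]) Ta := by
  apply fits_cons lxSteps [] Tone Ta (fits_nil lxSteps) 0
  intro k hk t
  interval_cases k <;>
    (norm_num [cub, cubI, Tone, Tone, Ta, Finset.sum_range_succ]; try ring)

set_option maxHeartbeats 1000000 in
lemma fits_B : Fits (sigAux 2 (plPath 2 8 lxSteps) [1]) Tb := by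
  apply fits_cons lxSteps [] Tone Tb (fits_nil lxSteps) 1
  intro k hk t
  interval_cases k <;>
    (norm_num [cub, cubI, Tone, Tone, Tb, Finset.sum_range_succ]; try ring)

set_option maxHeartbeats 1000000 in
lemma fits_AA : Fits (sigAux 2 (plPath 2 8 lxSteps) [0,0]) Taa := by
  apply fits_cons lxSteps [0] Ta Taa fits_A 0
  intro k hk t
  interval_cases k <;>
    (norm_num [cub, cubI, Tone, Ta, Taa, Finset.sum_range_succ]; try ring)

set_option maxHeartbeats 1000000 in
lemma fits_AB : Fits (sigAux 2 (plPath 2 8 lxSteps) [0,1]) Tab := by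
  apply fits_cons lxSteps [1] Tb Tab fits_B 0
  intro k hk t
  interval_cases k <;>
    (norm_num [cub, cubI, Tone, Tb, Tab, Finset.sum_range_succ]; try ring)

set_option maxHeartbeats 1000000 in
lemma fits_BA : Fits (sigAux 2 (plPath 2 8 lxSteps) [1,0]) Tba := by
  apply fits_cons lxSteps [0] Ta Tba fits_A 1
  intro k hk t
  interval_cases k <;>
    (norm_num [cub, cubI, Tone, Ta, Tba, Finset.sum_range_succ]; try ring)

set_option maxHeartbeats 1000000 in
lemma fits_BB : Fits (sigAux 2 (plPath 2 8 lxSteps) [1,1]) Tbb := by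
  apply fits_cons lxSteps [1] Tb Tbb fits_B 1
  intro k hk t
  interval_cases k <;>
    (norm_num [cub, cubI, Tone, Tb, Tbb, Finset.sum_range_succ]; try ring)

set_option maxHeartbeats 4000000 in
/-- There is an axis-parallel lattice path in the plane with 8 alternating steps of
lengths `1,1,-2,3,-1,-1,2,-3`, hence of total lattice length `14 < 2⁴ = 16`, whose
signature tensors of orders 1, 2 and 3 all vanish. -/
theorem lyons_xu_counterexample :
    (∀ i : Fin 8, lxSteps i 0 = 0 ∨ lxSteps i 1 = 0) ∧
    (∑ i : Fin 8, (|lxSteps i 0| + |lxSteps i 1|)) = 14 ∧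
    (14 : ℝ) < 2 ^ 4 ∧
    ∀ w : List (Fin 2), 1 ≤ w.length → w.length ≤ 3 →
      sigEntry 2 (plPath 2 8 lxSteps) w = 0 := by
  refine ⟨?_, ?_, by norm_num, ?_⟩
  · intro i; fin_cases i <;> norm_num [lxSteps]
  · norm_num [Fin.sum_univ_succ, lxSteps, Matrix.cons_val_succ, Matrix.cons_val_zero]
  · intro w h1 h3
    rcases w with _ | ⟨a, _ | ⟨b, _ | ⟨c, _ | ⟨d, rest⟩⟩⟩⟩
    · simp at h1
    · fin_cases a
      · show sigAux 2 (plPath 2 8 lxSteps) [0] 1 = 0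
        rw [sig_val lxSteps [] Tone (fits_nil lxSteps) 0]
        norm_num [Finset.sum_range_succ, cubI, Tone]
      · show sigAux 2 (plPath 2 8 lxSteps) [1] 1 = 0
        rw [sig_val lxSteps [] Tone (fits_nil lxSteps) 1]
        norm_num [Finset.sum_range_succ, cubI, Tone]
    · fin_cases a <;> fin_cases b
      · show sigAux 2 (plPath 2 8 lxSteps) [0, 0] 1 = 0
        rw [sig_val lxSteps [0] Ta fits_A 0]
        norm_num [Finset.sum_range_succ, cubI, Ta]
      · show sigAux 2 (plPath 2 8 lxSteps) [1, 0] 1 = 0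
        rw [sig_val lxSteps [0] Ta fits_A 1]
        norm_num [Finset.sum_range_succ, cubI, Ta]
      · show sigAux 2 (plPath 2 8 lxSteps) [0, 1] 1 = 0
        rw [sig_val lxSteps [1] Tb fits_B 0]
        norm_num [Finset.sum_range_succ, cubI, Tb]
      · show sigAux 2 (plPath 2 8 lxSteps) [1, 1] 1 = 0
        rw [sig_val lxSteps [1] Tb fits_B 1]
        norm_num [Finset.sum_range_succ, cubI, Tb]
    · fin_cases a <;> fin_cases b <;> fin_cases c
      · show sigAux 2 (plPath 2 8 lxSteps) [0, 0, 0] 1 = 0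
        rw [sig_val lxSteps [0, 0] Taa fits_AA 0]
        norm_num [Finset.sum_range_succ, cubI, Taa]
      · show sigAux 2 (plPath 2 8 lxSteps) [1, 0, 0] 1 = 0
        rw [sig_val lxSteps [0, 0] Taa fits_AA 1]
        norm_num [Finset.sum_range_succ, cubI, Taa]
      · show sigAux 2 (plPath 2 8 lxSteps) [0, 1, 0] 1 = 0
        rw [sig_val lxSteps [1, 0] Tba fits_BA 0]
        norm_num [Finset.sum_range_succ, cubI, Tba]
      · show sigAux 2 (plPath 2 8 lxSteps) [1, 1, 0] 1 = 0
        rw [sig_val lxSteps [1, 0] Tba fits_BA 1]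
        norm_num [Finset.sum_range_succ, cubI, Tba]
      · show sigAux 2 (plPath 2 8 lxSteps) [0, 0, 1] 1 = 0
        rw [sig_val lxSteps [0, 1] Tab fits_AB 0]
        norm_num [Finset.sum_range_succ, cubI, Tab]
      · show sigAux 2 (plPath 2 8 lxSteps) [1, 0, 1] 1 = 0
        rw [sig_val lxSteps [0, 1] Tab fits_AB 1]
        norm_num [Finset.sum_range_succ, cubI, Tab]
      · show sigAux 2 (plPath 2 8 lxSteps) [0, 1, 1] 1 = 0
        rw [sig_val lxSteps [1, 1] Tbb fits_BB 0]
        norm_num [Finset.sum_range_succ, cubI, Tbb]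
      · show sigAux 2 (plPath 2 8 lxSteps) [1, 1, 1] 1 = 0
        rw [sig_val lxSteps [1, 1] Tbb fits_BB 1]
        norm_num [Finset.sum_range_succ, cubI, Tbb]
    · simp only [List.length_cons] at h3; omega
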